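/- If X* minimizes g over the set of n×n matrices with nonnegative entries, then g(X*) + (2τ+η)·x* = τ·(α+β), where x* = Σ_{i,j} X*ᵢⱼ. -/

import Mathlib

/-- Generalized KL divergence, with the convention `0 · log 0 = 0`. -/
noncomputable def KL {n : ℕ} (x y : Fin n → ℝ) : ℝ :=
  ∑ i, (x i * Real.log (x i / y i) - x i + y i)

/-- Entropy of a nonnegative matrix, with the convention `0 · log 0 = 0`. -/
noncomputable def entH {n : ℕ} (X : Fin n → Fin n → ℝ) : ℝ :=
  -∑ i, ∑ j, X i j * (Real.log (X i j) - 1)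

/-- The entropic regularized UOT objective. -/
noncomputable def entUOT {n : ℕ} (a b : Fin n → ℝ) (C : Fin n → Fin n → ℝ)
    (τ η : ℝ) (X : Fin n → Fin n → ℝ) : ℝ :=
  (∑ i, ∑ j, C i j * X i j) - η * entH X
    + τ * KL (fun i => ∑ j, X i j) a + τ * KL (fun j => ∑ i, X i j) b

/-- If `X*` minimizes `g` over nonnegative matrices, then
`g(X*) + (2τ+η)·x* = τ·(α+β)` where `x* = Σᵢⱼ X*ᵢⱼ`. -/
lemma term1 (t x : ℝ) (ht : 0 < t) (hx : 0 ≤ x) :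
    (t * x) * (Real.log (t * x) - 1)
      = t * (x * (Real.log x - 1)) + x * (t * Real.log t) := by
  rcases eq_or_lt_of_le hx with h | h
  · simp [← h]
  · rw [Real.log_mul (ne_of_gt ht) (ne_of_gt h)]; ring

lemma term2 (t x y : ℝ) (ht : 0 < t) (hx : 0 ≤ x) (hy : 0 < y) :
    (t * x) * Real.log ((t * x) / y) - (t * x) + y
      = t * (x * Real.log (x / y) - x + y) + x * (t * Real.log t) + (1 - t) * y := by
  rcases eq_or_lt_of_le hx with h | h
  · simp [← h]; ring
  · rw [mul_div_assoc, Real.log_mul (ne_of_gt ht) (by positivity)]; ring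

lemma KL_scale {n : ℕ} (x y : Fin n → ℝ) (hx : ∀ i, 0 ≤ x i) (hy : ∀ i, 0 < y i)
    (t : ℝ) (ht : 0 < t) :
    KL (fun i => t * x i) y
      = t * KL x y + (∑ i, x i) * (t * Real.log t) + (1 - t) * (∑ i, y i) := by
  unfold KL
  rw [Finset.sum_congr rfl (fun i _ => term2 t (x i) (y i) ht (hx i) (hy i))]
  simp [Finset.sum_add_distrib, Finset.mul_sum, Finset.sum_mul, mul_sub, mul_add]

lemma entH_scale {n : ℕ} (X : Fin n → Fin n → ℝ) (hX : ∀ i j, 0 ≤ X i j)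
    (t : ℝ) (ht : 0 < t) :
    entH (fun i j => t * X i j)
      = t * entH X - (∑ i, ∑ j, X i j) * (t * Real.log t) := by
  unfold entH
  rw [Finset.sum_congr rfl (fun i _ => Finset.sum_congr rfl
    (fun j _ => term1 t (X i j) ht (hX i j)))]
  simp [Finset.sum_add_distrib, Finset.mul_sum, Finset.sum_mul, mul_sub, mul_add]
  ring

lemma entUOT_scale {n : ℕ} (a b : Fin n → ℝ) (ha : ∀ i, 0 < a i) (hb : ∀ j, 0 < b j)
    (C : Fin n → Fin n → ℝ) (τ η : ℝ)
    (X : Fin n → Fin n → ℝ) (hX : ∀ i j, 0 ≤ X i j) (t : ℝ) (ht : 0 < t) :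
    entUOT a b C τ η (fun i j => t * X i j)
      = t * entUOT a b C τ η X
        + (η + 2 * τ) * (∑ i, ∑ j, X i j) * (t * Real.log t)
        + τ * (1 - t) * ((∑ i, a i) + (∑ j, b j)) := by
  have hrow : ∀ i, 0 ≤ ∑ j, X i j := fun i => Finset.sum_nonneg fun j _ => hX i j
  have hcol : ∀ j, 0 ≤ ∑ i, X i j := fun j => Finset.sum_nonneg fun i _ => hX i j
  have h1 : (fun i => ∑ j, t * X i j) = (fun i => t * ∑ j, X i j) := by
    funext i; rw [Finset.mul_sum]
  have h2 : (fun j => ∑ i, t * X i j) = (fun j => t * ∑ i, X i j) := by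
    funext j; rw [Finset.mul_sum]
  have hswap : (∑ j, ∑ i, X i j) = ∑ i, ∑ j, X i j := Finset.sum_comm
  unfold entUOT
  rw [h1, h2, KL_scale _ _ hrow ha t ht, KL_scale _ _ hcol hb t ht,
    entH_scale X hX t ht, hswap]
  have hc : (∑ i, ∑ j, C i j * (t * X i j)) = t * ∑ i, ∑ j, C i j * X i j := by
    simp only [Finset.mul_sum]
    exact Finset.sum_congr rfl fun i _ => Finset.sum_congr rfl fun j _ => by ring
  rw [hc]
  ring

theorem stmt_9 {n : ℕ} (hn : 2 ≤ n) (a b : Fin n → ℝ)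
    (ha : ∀ i, 0 < a i) (hb : ∀ j, 0 < b j)
    (C : Fin n → Fin n → ℝ) (hC : ∀ i j, 0 ≤ C i j)
    (τ η : ℝ) (hτ : 0 < τ) (hη : 0 < η)
    (Xstar : Fin n → Fin n → ℝ) (hXstar : ∀ i j, 0 ≤ Xstar i j)
    (hmin : ∀ Y : Fin n → Fin n → ℝ, (∀ i j, 0 ≤ Y i j) →
      entUOT a b C τ η Xstar ≤ entUOT a b C τ η Y) :
    entUOT a b C τ η Xstar + (2 * τ + η) * (∑ i, ∑ j, Xstar i j)
      = τ * ((∑ i, a i) + (∑ j, b j)) := by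
  set g := entUOT a b C τ η Xstar with hg
  set x := ∑ i, ∑ j, Xstar i j with hx
  set α := ∑ i, a i
  set β := ∑ j, b j
  set K := η + 2 * τ with hK
  set L := g + K * x - τ * (α + β) with hL
  set h : ℝ → ℝ := fun t => (t - 1) * L + K * x * (t * Real.log t - t + 1) with hh
  have hmin' : IsLocalMin h 1 := by
    have hmem : Set.Ioi (0:ℝ) ∈ nhds (1:ℝ) :=
      isOpen_Ioi.mem_nhds (by norm_num)
    refine Filter.eventually_of_mem hmem fun t ht => ?_
    have ht : 0 < t := ht
    have h1 : h 1 = 0 := by simp [hh]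
    have h2 : h t = entUOT a b C τ η (fun i j => t * Xstar i j) - g := by
      rw [entUOT_scale a b ha hb C τ η Xstar hXstar t ht, hh, hL, hK]
      ring
    rw [h1, h2]
    have := hmin (fun i j => t * Xstar i j)
      (fun i j => mul_nonneg ht.le (hXstar i j))
    linarith
  have hderiv : HasDerivAt h L 1 := by
    have hd1 : HasDerivAt (fun t : ℝ => (t - 1) * L) L 1 := by
      simpa using ((hasDerivAt_id (1:ℝ)).sub_const 1).mul_const L
    have hd2 : HasDerivAt (fun t : ℝ => t * Real.log t - t + 1)
        ((Real.log 1 + 1) - 1) 1 := by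
      exact ((Real.hasDerivAt_mul_log one_ne_zero).sub (hasDerivAt_id 1)).add_const 1
    have hd3 : HasDerivAt (fun t : ℝ => K * x * (t * Real.log t - t + 1))
        (K * x * ((Real.log 1 + 1) - 1)) 1 := hd2.const_mul _
    have := hd1.add hd3
    rw [hh]
    have e : L + K * x * ((Real.log 1 + 1) - 1) = L := by simp [Real.log_one]
    rw [e] at this
    exact this
  have hL0 : L = 0 := by
    have := hmin'.deriv_eq_zero
    rwa [hderiv.deriv] at this
  have : g + K * x = τ * (α + β) := by linarith [hL0, hL ▸ hL0]
  calc g + (2 * τ + η) * x = g + K * x := by rw [hK]; ring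
    _ = τ * (α + β) := this
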